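/- Let H ∈ M_N(ℂ) be Hermitian and (V_d) a finite family of matrices in M_N(ℂ), and let 𝓛† denote the adjoint (Heisenberg-picture) Lindblad generator, 𝓛†(E) = i(HE - EH) + Σ_d (V_d† E V_d - ½(E V_d† V_d + V_d† V_d E)). If E ∈ M_N(ℂ) is unitary and satisfies 𝓛†(E) = iα E for some real number α, then α = 0. -/
import Mathlib

open Matrix
open scoped ComplexOrder

/-- The adjoint (Heisenberg-picture) Lindblad generator
`𝓛†(E) = i[H,E] + Σ_d (V_d† E V_d - ½(E V_d† V_d + V_d† V_d E))`. -/
noncomputable def lindbladAdj {n : Type*} [Fintype n] [DecidableEq n] {ι : Type*} [Fintype ι]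
    (H : Matrix n n ℂ) (V : ι → Matrix n n ℂ) (E : Matrix n n ℂ) : Matrix n n ℂ :=
  Complex.I • (H * E - E * H) +
    ∑ d, ((V d)ᴴ * E * V d - (1 / 2 : ℂ) • (E * ((V d)ᴴ * V d) + ((V d)ᴴ * V d) * E))

private lemma diss_aux {n : Type*} [Fintype n] [DecidableEq n] (E W : Matrix n n ℂ)
    (hEl : Eᴴ * E = 1) :
    Eᴴ * (Wᴴ * E * W - (1 / 2 : ℂ) • (E * (Wᴴ * W) + (Wᴴ * W) * E))
      + (Eᴴ * (Wᴴ * E * W - (1 / 2 : ℂ) • (E * (Wᴴ * W) + (Wᴴ * W) * E)))ᴴ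
      + (E * W - W * E)ᴴ * (E * W - W * E) = 0 := by
  have hE1 : ∀ X : Matrix n n ℂ, Eᴴ * (E * X) = X := by
    intro X; rw [← mul_assoc, hEl, one_mul]
  simp only [conjTranspose_mul, conjTranspose_sub, conjTranspose_add, conjTranspose_smul,
    conjTranspose_conjTranspose, mul_sub, sub_mul, mul_add, add_mul, smul_add, smul_sub,
    mul_smul_comm, smul_mul_assoc, mul_assoc, hEl, hE1, mul_one, one_mul,
    star_div₀, star_one, star_ofNat, RCLike.star_def, map_ofNat]
  module

private lemma ham_aux {n : Type*} [Fintype n] [DecidableEq n] (E H : Matrix n n ℂ)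
    (hEl : Eᴴ * E = 1) (hH : Hᴴ = H) :
    Eᴴ * (Complex.I • (H * E - E * H)) + (Eᴴ * (Complex.I • (H * E - E * H)))ᴴ = 0 := by
  have hE1 : ∀ X : Matrix n n ℂ, Eᴴ * (E * X) = X := by
    intro X; rw [← mul_assoc, hEl, one_mul]
  simp only [conjTranspose_mul, conjTranspose_sub, conjTranspose_smul,
    conjTranspose_conjTranspose, mul_sub, sub_mul, smul_sub,
    mul_smul_comm, smul_mul_assoc, mul_assoc, hEl, hE1, hH, mul_one, one_mul,
    Complex.star_def, Complex.conj_I]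
  module

/-- If a unitary `E` satisfies `𝓛†(E) = iα E` with `α` real, then `α = 0`. -/
theorem unitary_eigenoperator_eigenvalue_zero (N : ℕ) (hN : 1 ≤ N)
    (H : Matrix (Fin N) (Fin N) ℂ) (hH : H.IsHermitian)
    {ι : Type*} [Fintype ι] (V : ι → Matrix (Fin N) (Fin N) ℂ)
    (E : Matrix (Fin N) (Fin N) ℂ) (hE : Eᴴ * E = 1 ∧ E * Eᴴ = 1)
    (α : ℝ) (heig : lindbladAdj H V E = (Complex.I * (α : ℂ)) • E) :
    α = 0 := by
  obtain ⟨hEl, hEr⟩ := hE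
  have hE1 : ∀ X : Matrix (Fin N) (Fin N) ℂ, Eᴴ * (E * X) = X := by
    intro X; rw [← mul_assoc, hEl, one_mul]
  -- step 1: key identity
  have hkey : Eᴴ * lindbladAdj H V E + (Eᴴ * lindbladAdj H V E)ᴴ
      + ∑ d, (E * V d - V d * E)ᴴ * (E * V d - V d * E) = 0 := by
    calc Eᴴ * lindbladAdj H V E + (Eᴴ * lindbladAdj H V E)ᴴ
        + ∑ d, (E * V d - V d * E)ᴴ * (E * V d - V d * E)
        = (Eᴴ * (Complex.I • (H * E - E * H)) + (Eᴴ * (Complex.I • (H * E - E * H)))ᴴ)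
          + ∑ d, (Eᴴ * ((V d)ᴴ * E * V d - (1 / 2 : ℂ) • (E * ((V d)ᴴ * V d) + ((V d)ᴴ * V d) * E))
            + (Eᴴ * ((V d)ᴴ * E * V d - (1 / 2 : ℂ) • (E * ((V d)ᴴ * V d) + ((V d)ᴴ * V d) * E)))ᴴ
            + (E * V d - V d * E)ᴴ * (E * V d - V d * E)) := by
          rw [lindbladAdj]
          simp only [mul_add, conjTranspose_add, Finset.mul_sum, conjTranspose_sum,
            Finset.sum_add_distrib]
          abel
      _ = 0 := by
          rw [ham_aux E H hEl hH.eq, Finset.sum_eq_zero fun d _ => diss_aux E (V d) hEl,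
            add_zero]
  -- step 2: ∑ CᴴC = 0
  have hsum : ∑ d, (E * V d - V d * E)ᴴ * (E * V d - V d * E) = 0 := by
    have h1 : Eᴴ * lindbladAdj H V E = (Complex.I * (α : ℂ)) • (1 : Matrix (Fin N) (Fin N) ℂ) := by
      rw [heig, mul_smul_comm, hEl]
    rw [h1] at hkey
    have h2 : ((Complex.I * (α : ℂ)) • (1 : Matrix (Fin N) (Fin N) ℂ))ᴴ
        = (-(Complex.I * (α : ℂ))) • (1 : Matrix (Fin N) (Fin N) ℂ) := by
      simp [conjTranspose_smul, Complex.star_def, Complex.conj_I, Complex.conj_ofReal]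
    rw [h2] at hkey
    simpa [neg_smul, add_assoc] using hkey
  -- step 3: each commutator vanishes
  have hC : ∀ d, E * V d = V d * E := by
    have htr := congrArg Matrix.trace hsum
    rw [Matrix.trace_sum, Matrix.trace_zero] at htr
    have htr' : ∑ d, ∑ i, ∑ j, (Complex.normSq ((E * V d - V d * E) j i) : ℝ) = 0 := by
      have : (↑(∑ d, ∑ i, ∑ j, (Complex.normSq ((E * V d - V d * E) j i) : ℝ)) : ℂ) = 0 := by
        push_cast
        rw [← htr]
        congr 1; ext d
        rw [Matrix.trace]
        simp only [Matrix.diag_apply, Matrix.mul_apply, conjTranspose_apply]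
        congr 1; ext i; congr 1; ext j
        rw [Complex.normSq_eq_conj_mul_self]; rfl
      exact_mod_cast this
    intro d
    have hd : ∑ i, ∑ j, (Complex.normSq ((E * V d - V d * E) j i) : ℝ) = 0 := by
      refine (Finset.sum_eq_zero_iff_of_nonneg fun d' _ => ?_).1 htr' d (Finset.mem_univ d)
      exact Finset.sum_nonneg fun i _ => Finset.sum_nonneg fun j _ => Complex.normSq_nonneg _
    have : ∀ i j, (E * V d - V d * E) j i = 0 := by
      intro i j
      have hi := (Finset.sum_eq_zero_iff_of_nonneg fun i' _ =>
        Finset.sum_nonneg fun j' _ => Complex.normSq_nonneg _).1 hd i (Finset.mem_univ i)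
      have hj := (Finset.sum_eq_zero_iff_of_nonneg fun j' _ =>
        Complex.normSq_nonneg _).1 hi j (Finset.mem_univ j)
      exact Complex.normSq_eq_zero.1 hj
    have : E * V d - V d * E = 0 := by ext j i; exact this i j
    exact sub_eq_zero.1 this
  -- step 4: trace computation
  have htr2 := congrArg Matrix.trace (congrArg (fun M => Eᴴ * M) heig)
  simp only [mul_smul_comm, hEl] at htr2
  have hL0 : (Eᴴ * lindbladAdj H V E).trace = 0 := by
    rw [lindbladAdj, mul_add, Matrix.trace_add, Finset.mul_sum, Matrix.trace_sum]
    have hham : (Eᴴ * (Complex.I • (H * E - E * H))).trace = 0 := by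
      rw [mul_smul_comm, Matrix.trace_smul, mul_sub, Matrix.trace_sub]
      rw [Matrix.trace_mul_comm Eᴴ (H * E), mul_assoc, hEr, mul_one, hE1 H]
      simp
    have hdiss : ∀ d, (Eᴴ * ((V d)ᴴ * E * V d
        - (1 / 2 : ℂ) • (E * ((V d)ᴴ * V d) + ((V d)ᴴ * V d) * E))).trace = 0 := by
      intro d
      rw [mul_sub, mul_smul_comm, Matrix.trace_sub, Matrix.trace_smul, mul_add, Matrix.trace_add]
      have h1 : (Eᴴ * ((V d)ᴴ * E * V d)).trace = ((V d)ᴴ * V d).trace := by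
        rw [show (V d)ᴴ * E * V d = (V d)ᴴ * (E * V d) from mul_assoc _ _ _, hC d,
          show Eᴴ * ((V d)ᴴ * (V d * E)) = Eᴴ * ((V d)ᴴ * V d) * E by
            rw [mul_assoc, mul_assoc],
          Matrix.trace_mul_cycle, hEr, one_mul]
      have h2 : (Eᴴ * (E * ((V d)ᴴ * V d))).trace = ((V d)ᴴ * V d).trace := by
        rw [hE1]
      have h3 : (Eᴴ * ((V d)ᴴ * V d * E)).trace = ((V d)ᴴ * V d).trace := by
        rw [show Eᴴ * ((V d)ᴴ * V d * E) = Eᴴ * ((V d)ᴴ * V d) * E by simp only [mul_assoc],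
          Matrix.trace_mul_cycle, hEr, one_mul]
      rw [h1, h2, h3]; simp [smul_eq_mul]; ring
    rw [hham, Finset.sum_eq_zero fun d _ => hdiss d, add_zero]
  rw [hL0, Matrix.trace_smul, Matrix.trace_one] at htr2
  have hNe : ((Fintype.card (Fin N) : ℂ)) ≠ 0 := by
    simp only [Fintype.card_fin, Ne, Nat.cast_eq_zero]; omega
  have : (α : ℂ) = 0 := by
    have h0 := htr2.symm
    simp only [smul_eq_mul, mul_eq_zero] at h0
    rcases h0 with (h | h) | h
    · exact absurd h Complex.I_ne_zero
    · exact h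
    · exact absurd h hNe
  exact_mod_cast this
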